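/- arXiv:2010.10732 — 7 statements merged into one kernel-verified Lean document; each statement's English description precedes it below -/
import Mathlib

section
/- Let v, ṽ be random row vectors in ℝ^d with E[v] = E[ṽ], Cov(v) = Cov(ṽ) = Σ, and Cov(v, ṽ) = Σ − diag(s^l). Let W ∈ ℝ^{d×m}, and let b, b̃ be zero-mean random vectors in ℝ^m, independent of (v, ṽ), with Cov(b) = Cov(b̃) = Σ_b and Cov(b, b̃) = Σ_b + Wᵀ diag(s^l) W − diag(s^{l+1}). Then u = vW + b and ũ = ṽW + b̃ satisfy E[u] = E[ũ], Cov(u) = Cov(ũ) = WᵀΣW + Σ_b, and Cov(u, ũ) = Cov(u) − diag(s^{l+1}); that is, ũ is a second-order knockoff of u with parameter s^{l+1}. -/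
open MeasureTheory ProbabilityTheory Matrix

/-- The (cross-)covariance matrix of two random vectors: `cov X Y i j = Cov(Xᵢ, Yⱼ)`. -/
noncomputable def covMatrix {Ω : Type*} [MeasurableSpace Ω] (μ : Measure Ω)
    {n m : ℕ} (X : Ω → Fin n → ℝ) (Y : Ω → Fin m → ℝ) : Matrix (Fin n) (Fin m) ℝ :=
  fun i j => ∫ ω, (X ω i - ∫ ω', X ω' i ∂μ) * (Y ω j - ∫ ω', Y ω' j ∂μ) ∂μ

open scoped ENNReal

set_option linter.unusedSectionVars false

noncomputable def covF {Ω : Type*} [MeasurableSpace Ω] (μ : Measure Ω) (f g : Ω → ℝ) : ℝ :=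
  ∫ ω, (f ω - ∫ ω', f ω' ∂μ) * (g ω - ∫ ω', g ω' ∂μ) ∂μ

section CovAux
variable {Ω : Type*} [MeasurableSpace Ω] {μ : Measure Ω} [IsProbabilityMeasure μ]

lemma l2_mul_integrable {f g : Ω → ℝ} (hf : MemLp f 2 μ) (hg : MemLp g 2 μ) :
    Integrable (fun ω => f ω * g ω) μ := by
  rw [← memLp_one_iff_integrable]
  have : (1 : ℝ≥0∞)/1 = 1/2 + 1/2 := by
    rw [ENNReal.div_add_div_same]
    norm_num
    rw [ENNReal.div_self] <;> norm_num
  exact hg.smul hf (hpqr := ⟨by simpa [one_div] using this.symm⟩)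

lemma covF_eq {f g : Ω → ℝ} (hf : MemLp f 2 μ) (hg : MemLp g 2 μ) :
    covF μ f g = ∫ ω, f ω * g ω ∂μ - (∫ ω, f ω ∂μ) * (∫ ω, g ω ∂μ) := by
  have hfi : Integrable f μ := hf.integrable one_le_two
  have hgi : Integrable g μ := hg.integrable one_le_two
  set a := ∫ ω', f ω' ∂μ with ha
  set c := ∫ ω', g ω' ∂μ with hc
  have h1 : ∀ ω, (f ω - a) * (g ω - c) = (f ω * g ω - a * g ω) - (c * f ω - a * c) := by
    intro ω; ring
  have I0 : Integrable (fun ω => f ω * g ω) μ := l2_mul_integrable hf hg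
  have I1 : Integrable (fun ω => a * g ω) μ := hgi.const_mul a
  have I2 : Integrable (fun ω => c * f ω) μ := hfi.const_mul c
  have I3 : Integrable (fun _ : Ω => a * c) μ := integrable_const _
  unfold covF
  rw [← ha, ← hc]
  simp_rw [h1]
  have I01 : Integrable (fun ω => f ω * g ω - a * g ω) μ := I0.sub I1
  have I23 : Integrable (fun ω => c * f ω - a * c) μ := I2.sub I3
  rw [integral_sub I01 I23, integral_sub I0 I1, integral_sub I2 I3,
      integral_const_mul, integral_const_mul, integral_const]
  simp [← ha, ← hc]
  ring

lemma covF_comm {f g : Ω → ℝ} : covF μ f g = covF μ g f := by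
  unfold covF; simp_rw [mul_comm]

lemma covF_add_left {f g h : Ω → ℝ} (hf : MemLp f 2 μ) (hg : MemLp g 2 μ)
    (hh : MemLp h 2 μ) :
    covF μ (fun ω => f ω + g ω) h = covF μ f h + covF μ g h := by
  have hfg : MemLp (fun ω => f ω + g ω) 2 μ := hf.add hg
  rw [covF_eq hfg hh, covF_eq hf hh, covF_eq hg hh]
  have e : ∀ ω, (f ω + g ω) * h ω = f ω * h ω + g ω * h ω := fun ω => by ring
  simp_rw [e]
  rw [integral_add (l2_mul_integrable hf hh) (l2_mul_integrable hg hh),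
      integral_add (hf.integrable one_le_two) (hg.integrable one_le_two)]
  ring

lemma covF_add_right {f g h : Ω → ℝ} (hf : MemLp f 2 μ) (hg : MemLp g 2 μ)
    (hh : MemLp h 2 μ) :
    covF μ h (fun ω => f ω + g ω) = covF μ h f + covF μ h g := by
  rw [covF_comm, covF_add_left hf hg hh, covF_comm (μ := μ) (f := f),
    covF_comm (μ := μ) (f := g)]

lemma covF_mul_const_left {f g : Ω → ℝ} (c : ℝ) (hf : MemLp f 2 μ) (hg : MemLp g 2 μ) :
    covF μ (fun ω => f ω * c) g = c * covF μ f g := by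
  have hcf : MemLp (fun ω => f ω * c) 2 μ := by
    simpa [mul_comm] using hf.const_mul c
  rw [covF_eq hcf hg, covF_eq hf hg]
  have e : ∀ ω, f ω * c * g ω = c * (f ω * g ω) := fun ω => by ring
  simp_rw [e]
  rw [integral_const_mul]
  have e2 : (∫ ω, f ω * c ∂μ) = (∫ ω, f ω ∂μ) * c := integral_mul_const c f
  rw [e2]
  ring

lemma covF_sum_left {ι : Type*} (s : Finset ι) (f : ι → Ω → ℝ) (c : ι → ℝ) (g : Ω → ℝ)
    (hf : ∀ i, MemLp (f i) 2 μ) (hg : MemLp g 2 μ) :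
    covF μ (fun ω => ∑ i ∈ s, f i ω * c i) g = ∑ i ∈ s, c i * covF μ (f i) g := by
  classical
  induction s using Finset.induction with
  | empty => simp [covF]
  | insert a s hns ih =>
    have hsum : MemLp (fun ω => ∑ i ∈ s, f i ω * c i) 2 μ :=
      memLp_finset_sum s fun i _ => by simpa [mul_comm] using (hf i).const_mul (c i)
    have hfa : MemLp (fun ω => f a ω * c a) 2 μ := by
      simpa [mul_comm] using (hf a).const_mul (c a)
    simp_rw [Finset.sum_insert hns]
    rw [covF_add_left hfa hsum hg, covF_mul_const_left (c a) (hf a) hg, ih]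

lemma covF_sum_right {ι : Type*} (s : Finset ι) (f : ι → Ω → ℝ) (c : ι → ℝ) (g : Ω → ℝ)
    (hf : ∀ i, MemLp (f i) 2 μ) (hg : MemLp g 2 μ) :
    covF μ g (fun ω => ∑ i ∈ s, f i ω * c i) = ∑ i ∈ s, c i * covF μ g (f i) := by
  rw [covF_comm, covF_sum_left s f c g hf hg]
  exact Finset.sum_congr rfl fun i _ => by rw [covF_comm]

lemma covF_indep {f g : Ω → ℝ} (h : IndepFun f g μ) (hf : MemLp f 2 μ)
    (hg : MemLp g 2 μ) : covF μ f g = 0 := by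
  rw [covF_eq hf hg]
  have h2 : ∫ ω, f ω * g ω ∂μ = (∫ ω, f ω ∂μ) * ∫ ω, g ω ∂μ :=
    h.integral_mul_eq_mul_integral hf.1 hg.1
  rw [h2]; ring

lemma memℒp_lin {d : ℕ} {v : Ω → Fin d → ℝ} (hv : ∀ i, MemLp (fun ω => v ω i) 2 μ)
    {m : ℕ} (W : Matrix (Fin d) (Fin m) ℝ) (j : Fin m) :
    MemLp (fun ω => ∑ i, v ω i * W i j) 2 μ :=
  memLp_finset_sum _ fun i _ => by simpa [mul_comm] using (hv i).const_mul (W i j)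

/-- master covariance computation -/
lemma covMatrix_lin_add {d m : ℕ} (v v' : Ω → Fin d → ℝ) (b b' : Ω → Fin m → ℝ)
    (hv : ∀ i, MemLp (fun ω => v ω i) 2 μ) (hv' : ∀ i, MemLp (fun ω => v' ω i) 2 μ)
    (hb : ∀ j, MemLp (fun ω => b ω j) 2 μ) (hb' : ∀ j, MemLp (fun ω => b' ω j) 2 μ)
    (W : Matrix (Fin d) (Fin m) ℝ)
    (hind1 : ∀ i j, covF μ (fun ω => v ω i) (fun ω => b' ω j) = 0)
    (hind2 : ∀ i j, covF μ (fun ω => b ω j) (fun ω => v' ω i) = 0)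
    (j j' : Fin m) :
    covF μ (fun ω => (∑ i, v ω i * W i j) + b ω j)
      (fun ω => (∑ i, v' ω i * W i j') + b' ω j')
      = (Wᵀ * Matrix.of (fun i k => covF μ (fun ω => v ω i) (fun ω => v' ω k)) * W) j j'
        + covF μ (fun ω => b ω j) (fun ω => b' ω j') := by
  have hS : MemLp (fun ω => ∑ i, v ω i * W i j) 2 μ := memℒp_lin hv W j
  have hS' : MemLp (fun ω => ∑ i, v' ω i * W i j') 2 μ := memℒp_lin hv' W j'
  have hT : MemLp (fun ω => (∑ i, v' ω i * W i j') + b' ω j') 2 μ := hS'.add (hb' j')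
  rw [covF_add_left hS (hb j) hT,
      covF_add_right hS' (hb' j') hS,
      covF_add_right hS' (hb' j') (hb j),
      covF_sum_left Finset.univ (fun i ω => v ω i) (fun i => W i j) _ hv (hb' j'),
      covF_sum_left Finset.univ (fun i ω => v ω i) (fun i => W i j) _ hv hS',
      covF_sum_right Finset.univ (fun i ω => v' ω i) (fun i => W i j') _ hv' (hb j)]
  simp only [hind1, hind2, mul_zero, Finset.sum_const_zero, add_zero, zero_add]
  have e : ∀ i : Fin d, covF μ (fun ω => v ω i) (fun ω => ∑ k, v' ω k * W k j')
      = ∑ k, W k j' * covF μ (fun ω => v ω i) (fun ω => v' ω k) := fun i =>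
    covF_sum_right Finset.univ (fun k ω => v' ω k) (fun k => W k j') _ hv' (hv i)
  simp_rw [e]
  congr 1
  rw [Matrix.mul_apply]
  simp_rw [Matrix.mul_apply, Matrix.transpose_apply, Matrix.of_apply, Finset.mul_sum,
    Finset.sum_mul]
  rw [Finset.sum_comm]
  exact Finset.sum_congr rfl fun i _ => Finset.sum_congr rfl fun k _ => by ring

lemma integral_lin_add {d m : ℕ} (v : Ω → Fin d → ℝ) (b : Ω → Fin m → ℝ)
    (hv : ∀ i, MemLp (fun ω => v ω i) 2 μ) (hb : ∀ j, MemLp (fun ω => b ω j) 2 μ)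
    (W : Matrix (Fin d) (Fin m) ℝ) (j : Fin m) :
    ∫ ω, (∑ i, v ω i * W i j) + b ω j ∂μ
      = (∑ i, (∫ ω, v ω i ∂μ) * W i j) + ∫ ω, b ω j ∂μ := by
  rw [integral_add ((memℒp_lin hv W j).integrable one_le_two) ((hb j).integrable one_le_two),
    integral_finset_sum _ fun i _ => ((hv i).integrable one_le_two).mul_const (W i j)]
  simp_rw [integral_mul_const]
end CovAux

/-- Lemma 2 of the paper: passing a second-order knockoff pair through a linear layer and adding
suitably correlated independent zero-mean biases yields again a second-order knockoff pair,
with parameter `s'` (i.e. `s^{l+1}`). -/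
theorem second_order_knockoff_linear_with_bias
    {Ω : Type*} [MeasurableSpace Ω] (μ : Measure Ω) [IsProbabilityMeasure μ]
    {d m : ℕ} (v vtil : Ω → Fin d → ℝ) (b btil : Ω → Fin m → ℝ)
    (hv : ∀ i, MemLp (fun ω => v ω i) 2 μ)
    (hvtil : ∀ i, MemLp (fun ω => vtil ω i) 2 μ)
    (hb : ∀ j, MemLp (fun ω => b ω j) 2 μ)
    (hbtil : ∀ j, MemLp (fun ω => btil ω j) 2 μ)
    (Sig : Matrix (Fin d) (Fin d) ℝ) (s : Fin d → ℝ) (s' : Fin m → ℝ)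
    (Sigb : Matrix (Fin m) (Fin m) ℝ)
    (W : Matrix (Fin d) (Fin m) ℝ)
    (hmean : ∀ i, ∫ ω, v ω i ∂μ = ∫ ω, vtil ω i ∂μ)
    (hcov : covMatrix μ v v = Sig) (hcovtil : covMatrix μ vtil vtil = Sig)
    (hcross : covMatrix μ v vtil = Sig - Matrix.diagonal s)
    (hbmean : ∀ j, ∫ ω, b ω j ∂μ = 0) (hbtilmean : ∀ j, ∫ ω, btil ω j ∂μ = 0)
    (hbcov : covMatrix μ b b = Sigb) (hbtilcov : covMatrix μ btil btil = Sigb)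
    (hbcross : covMatrix μ b btil =
      Sigb + Wᵀ * Matrix.diagonal s * W - Matrix.diagonal s')
    (hindep : IndepFun (fun ω => (v ω, vtil ω)) (fun ω => (b ω, btil ω)) μ) :
    (∀ j, ∫ ω, (∑ i, v ω i * W i j) + b ω j ∂μ =
        ∫ ω, (∑ i, vtil ω i * W i j) + btil ω j ∂μ) ∧
    covMatrix μ (fun ω j => (∑ i, v ω i * W i j) + b ω j)
        (fun ω j => (∑ i, v ω i * W i j) + b ω j) = Wᵀ * Sig * W + Sigb ∧
    covMatrix μ (fun ω j => (∑ i, vtil ω i * W i j) + btil ω j)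
        (fun ω j => (∑ i, vtil ω i * W i j) + btil ω j) = Wᵀ * Sig * W + Sigb ∧
    covMatrix μ (fun ω j => (∑ i, v ω i * W i j) + b ω j)
        (fun ω j => (∑ i, vtil ω i * W i j) + btil ω j) =
      (Wᵀ * Sig * W + Sigb) - Matrix.diagonal s' := by
  classical
  -- componentwise independence facts
  have m1 : ∀ i : Fin d, Measurable (fun p : (Fin d → ℝ) × (Fin d → ℝ) => p.1 i) :=
    fun i => (measurable_pi_apply i).comp measurable_fst
  have m2 : ∀ i : Fin d, Measurable (fun p : (Fin d → ℝ) × (Fin d → ℝ) => p.2 i) :=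
    fun i => (measurable_pi_apply i).comp measurable_snd
  have n1 : ∀ j : Fin m, Measurable (fun p : (Fin m → ℝ) × (Fin m → ℝ) => p.1 j) :=
    fun j => (measurable_pi_apply j).comp measurable_fst
  have n2 : ∀ j : Fin m, Measurable (fun p : (Fin m → ℝ) × (Fin m → ℝ) => p.2 j) :=
    fun j => (measurable_pi_apply j).comp measurable_snd
  have hz_vb : ∀ i j, covF μ (fun ω => v ω i) (fun ω => b ω j) = 0 :=
    fun i j => covF_indep (hindep.comp (m1 i) (n1 j)) (hv i) (hb j)
  have hz_vbt : ∀ i j, covF μ (fun ω => v ω i) (fun ω => btil ω j) = 0 :=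
    fun i j => covF_indep (hindep.comp (m1 i) (n2 j)) (hv i) (hbtil j)
  have hz_vtb : ∀ i j, covF μ (fun ω => vtil ω i) (fun ω => b ω j) = 0 :=
    fun i j => covF_indep (hindep.comp (m2 i) (n1 j)) (hvtil i) (hb j)
  have hz_vtbt : ∀ i j, covF μ (fun ω => vtil ω i) (fun ω => btil ω j) = 0 :=
    fun i j => covF_indep (hindep.comp (m2 i) (n2 j)) (hvtil i) (hbtil j)
  have hz_bv : ∀ i j, covF μ (fun ω => b ω j) (fun ω => v ω i) = 0 :=
    fun i j => covF_indep ((hindep.comp (m1 i) (n1 j)).symm) (hb j) (hv i)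
  have hz_btvt : ∀ i j, covF μ (fun ω => btil ω j) (fun ω => vtil ω i) = 0 :=
    fun i j => covF_indep ((hindep.comp (m2 i) (n2 j)).symm) (hbtil j) (hvtil i)
  have hz_bvt : ∀ i j, covF μ (fun ω => b ω j) (fun ω => vtil ω i) = 0 :=
    fun i j => covF_indep ((hindep.comp (m2 i) (n1 j)).symm) (hb j) (hvtil i)
  -- the three covariance identities via the master lemma
  have key1 : covMatrix μ (fun ω j => (∑ i, v ω i * W i j) + b ω j)
      (fun ω j => (∑ i, v ω i * W i j) + b ω j)
      = Wᵀ * covMatrix μ v v * W + covMatrix μ b b := by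
    funext j j'
    exact covMatrix_lin_add v v b b hv hv hb hb W hz_vb hz_bv j j'
  have key2 : covMatrix μ (fun ω j => (∑ i, vtil ω i * W i j) + btil ω j)
      (fun ω j => (∑ i, vtil ω i * W i j) + btil ω j)
      = Wᵀ * covMatrix μ vtil vtil * W + covMatrix μ btil btil := by
    funext j j'
    exact covMatrix_lin_add vtil vtil btil btil hvtil hvtil hbtil hbtil W hz_vtbt hz_btvt j j'
  have key3 : covMatrix μ (fun ω j => (∑ i, v ω i * W i j) + b ω j)
      (fun ω j => (∑ i, vtil ω i * W i j) + btil ω j)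
      = Wᵀ * covMatrix μ v vtil * W + covMatrix μ b btil := by
    funext j j'
    exact covMatrix_lin_add v vtil b btil hv hvtil hb hbtil W hz_vbt hz_bvt j j'
  refine ⟨?_, ?_, ?_, ?_⟩
  · intro j
    rw [integral_lin_add v b hv hb W j, integral_lin_add vtil btil hvtil hbtil W j,
      hbmean j, hbtilmean j]
    simp_rw [hmean]
  · rw [key1, hcov, hbcov]
  · rw [key2, hcovtil, hbtilcov]
  · rw [key3, hcross, hbcross]
    rw [Matrix.mul_sub, Matrix.sub_mul]
    abel
end

section
/- Let z = (v, ṽ) ∈ ℝ^{2d} be a random vector with joint covariance matrix G = [[Σ, Σ − diag(s)], [Σ − diag(s), Σ]] and with E[v] = E[ṽ]. Then for every subset S ⊆ {1,…,d}, the joint first and second moments of [v, ṽ]_{swap(S)} equal those of [v, ṽ]. -/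
open MeasureTheory Matrix


lemma cov_expand' {Ω : Type*} [MeasurableSpace Ω] (μ : Measure Ω) [IsProbabilityMeasure μ]
    (X Y : Ω → ℝ) (hX : MemLp X 2 μ) (hY : MemLp Y 2 μ) :
    ∫ ω, (X ω - ∫ ω', X ω' ∂μ) * (Y ω - ∫ ω', Y ω' ∂μ) ∂μ
      = (∫ ω, X ω * Y ω ∂μ) - (∫ ω, X ω ∂μ) * (∫ ω, Y ω ∂μ) := by
  set a := ∫ ω', X ω' ∂μ with ha
  set b := ∫ ω', Y ω' ∂μ with hb
  have hXY : Integrable (fun ω => X ω * Y ω) μ := by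
    have h := (MemLp.smul (p := 2) (q := 2) (r := 1) (hpqr := ⟨by simp [ENNReal.inv_two_add_inv_two]⟩) hY hX).integrable le_rfl
    exact h
  have hXi : Integrable X μ := hX.integrable (by norm_num)
  have hYi : Integrable Y μ := hY.integrable (by norm_num)
  have h1 : ∀ ω, (X ω - a) * (Y ω - b) = X ω * Y ω - a * Y ω - b * X ω + a * b := by
    intro ω; ring
  simp_rw [h1]
  have h2 : Integrable (fun ω => X ω * Y ω - a * Y ω) μ := hXY.sub (hYi.const_mul a)
  have h3 : Integrable (fun ω => X ω * Y ω - a * Y ω - b * X ω) μ := h2.sub (hXi.const_mul b)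
  rw [integral_add h3 (integrable_const _), integral_sub h2 (hXi.const_mul b),
    integral_sub hXY (hYi.const_mul a), MeasureTheory.integral_const_mul, MeasureTheory.integral_const_mul, integral_const]
  simp [← ha, ← hb]
  ring


/-- If `(v, vtil)` has equal means and joint covariance of block form
`[[Σ, Σ − diag s], [Σ − diag s, Σ]]`, then for every subset `S` of coordinates the first and
second joint moments of the swapped pair equal those of the original pair. -/
theorem swap_preserves_first_two_moments
    {Ω : Type*} [MeasurableSpace Ω] (μ : Measure Ω) [IsProbabilityMeasure μ]
    {d : ℕ} (v vtil : Ω → Fin d → ℝ)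
    (hv : ∀ i, MemLp (fun ω => v ω i) 2 μ)
    (hvtil : ∀ i, MemLp (fun ω => vtil ω i) 2 μ)
    (Sig : Matrix (Fin d) (Fin d) ℝ) (s : Fin d → ℝ)
    (hmean : ∀ i, ∫ ω, v ω i ∂μ = ∫ ω, vtil ω i ∂μ)
    (hcov : (fun i j => ∫ ω, (v ω i - ∫ ω', v ω' i ∂μ) * (v ω j - ∫ ω', v ω' j ∂μ) ∂μ) = Sig)
    (hcovtil :
      (fun i j => ∫ ω, (vtil ω i - ∫ ω', vtil ω' i ∂μ) * (vtil ω j - ∫ ω', vtil ω' j ∂μ) ∂μ)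
        = Sig)
    (hcross :
      (fun i j => ∫ ω, (v ω i - ∫ ω', v ω' i ∂μ) * (vtil ω j - ∫ ω', vtil ω' j ∂μ) ∂μ)
        = fun i j => Sig i j - Matrix.diagonal s i j)
    (hcross' :
      (fun i j => ∫ ω, (vtil ω i - ∫ ω', vtil ω' i ∂μ) * (v ω j - ∫ ω', v ω' j ∂μ) ∂μ)
        = fun i j => Sig i j - Matrix.diagonal s i j) :
    ∀ S : Finset (Fin d),
      (∀ i, ∫ ω, (if i ∈ S then vtil ω i else v ω i) ∂μ = ∫ ω, v ω i ∂μ) ∧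
      (∀ i, ∫ ω, (if i ∈ S then v ω i else vtil ω i) ∂μ = ∫ ω, vtil ω i ∂μ) ∧
      (∀ i j, ∫ ω, (if i ∈ S then vtil ω i else v ω i) * (if j ∈ S then vtil ω j else v ω j) ∂μ
          = ∫ ω, v ω i * v ω j ∂μ) ∧
      (∀ i j, ∫ ω, (if i ∈ S then vtil ω i else v ω i) * (if j ∈ S then v ω j else vtil ω j) ∂μ
          = ∫ ω, v ω i * vtil ω j ∂μ) ∧
      (∀ i j, ∫ ω, (if i ∈ S then v ω i else vtil ω i) * (if j ∈ S then v ω j else vtil ω j) ∂μ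
          = ∫ ω, vtil ω i * vtil ω j ∂μ) := by
  have c1 : ∀ i j, ∫ ω, (v ω i - ∫ ω', v ω' i ∂μ) * (v ω j - ∫ ω', v ω' j ∂μ) ∂μ = Sig i j :=
    fun i j => congrFun (congrFun hcov i) j
  have c2 : ∀ i j, ∫ ω, (vtil ω i - ∫ ω', vtil ω' i ∂μ) * (vtil ω j - ∫ ω', vtil ω' j ∂μ) ∂μ
      = Sig i j := fun i j => congrFun (congrFun hcovtil i) j
  have c3 : ∀ i j, ∫ ω, (v ω i - ∫ ω', v ω' i ∂μ) * (vtil ω j - ∫ ω', vtil ω' j ∂μ) ∂μ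
      = Sig i j - Matrix.diagonal s i j := fun i j => congrFun (congrFun hcross i) j
  have c4 : ∀ i j, ∫ ω, (vtil ω i - ∫ ω', vtil ω' i ∂μ) * (v ω j - ∫ ω', v ω' j ∂μ) ∂μ
      = Sig i j - Matrix.diagonal s i j := fun i j => congrFun (congrFun hcross' i) j
  set m : Fin d → ℝ := fun i => ∫ ω, v ω i ∂μ with hm
  have hm' : ∀ i, ∫ ω, vtil ω i ∂μ = m i := fun i => (hmean i).symm
  have M1 : ∀ i j, ∫ ω, v ω i * v ω j ∂μ = Sig i j + m i * m j := by
    intro i j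
    have := cov_expand' μ (fun ω => v ω i) (fun ω => v ω j) (hv i) (hv j)
    rw [c1 i j] at this; linarith
  have M2 : ∀ i j, ∫ ω, vtil ω i * vtil ω j ∂μ = Sig i j + m i * m j := by
    intro i j
    have := cov_expand' μ (fun ω => vtil ω i) (fun ω => vtil ω j) (hvtil i) (hvtil j)
    rw [c2 i j, hm' i, hm' j] at this; linarith
  have M3 : ∀ i j, ∫ ω, v ω i * vtil ω j ∂μ
      = Sig i j - Matrix.diagonal s i j + m i * m j := by
    intro i j
    have := cov_expand' μ (fun ω => v ω i) (fun ω => vtil ω j) (hv i) (hvtil j)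
    rw [c3 i j, hm' j] at this; linarith
  have M4 : ∀ i j, ∫ ω, vtil ω i * v ω j ∂μ
      = Sig i j - Matrix.diagonal s i j + m i * m j := by
    intro i j
    have := cov_expand' μ (fun ω => vtil ω i) (fun ω => v ω j) (hvtil i) (hv j)
    rw [c4 i j, hm' i] at this; linarith
  intro S
  refine ⟨fun i => ?_, fun i => ?_, fun i j => ?_, fun i j => ?_, fun i j => ?_⟩
  · by_cases h : i ∈ S <;> simp [h, hm' i, hm]
  · by_cases h : i ∈ S <;> simp [h, hm' i, hm]
  · by_cases hi : i ∈ S <;> by_cases hj : j ∈ S <;> simp only [if_pos, if_neg, hi, hj, if_true,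
      if_false] <;> rw [M1]
    · rw [M2]
    · have hne : i ≠ j := fun h => hj (h ▸ hi)
      rw [M4, Matrix.diagonal_apply_ne _ hne]; ring
    · have hne : i ≠ j := fun h => hi (h ▸ hj)
      rw [M3, Matrix.diagonal_apply_ne _ hne]; ring
  · by_cases hi : i ∈ S <;> by_cases hj : j ∈ S <;> simp only [if_pos, if_neg, hi, hj, if_true,
      if_false] <;> rw [M3]
    · rw [M4]
    · have hne : i ≠ j := fun h => hj (h ▸ hi)
      rw [M2, Matrix.diagonal_apply_ne _ hne]; ring
    · have hne : i ≠ j := fun h => hi (h ▸ hj)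
      rw [M1, Matrix.diagonal_apply_ne _ hne]; ring
  · by_cases hi : i ∈ S <;> by_cases hj : j ∈ S <;> simp only [if_pos, if_neg, hi, hj, if_true,
      if_false] <;> rw [M2]
    · rw [M1]
    · have hne : i ≠ j := fun h => hj (h ▸ hi)
      rw [M3, Matrix.diagonal_apply_ne _ hne]; ring
    · have hne : i ≠ j := fun h => hi (h ▸ hj)
      rw [M4, Matrix.diagonal_apply_ne _ hne]; ring
end

section
/- Conversely, if the pair (v, ṽ) of square-integrable random vectors in ℝ^d has the property that [v, ṽ] and [v, ṽ]_{swap(S)} have the same mean vector and covariance matrix for every subset S ⊆ {1,…,d}, then E[v] = E[ṽ], Cov(v) = Cov(ṽ), and Cov(v, ṽ) differs from Cov(v) only on the diagonal, i.e. Cov(v, ṽ)_{ij} = Cov(v)_{ij} for all i ≠ j. -/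
open MeasureTheory Matrix

/-- Converse: if the mean vector and covariance matrix of `[v, vtil]` are invariant under
swapping any subset of corresponding coordinates, then `E[v] = E[vtil]`, `Cov v = Cov vtil`,
and the cross-covariance agrees with `Cov v` off the diagonal. -/
theorem second_order_swap_invariance_characterization
    {Ω : Type*} [MeasurableSpace Ω] (μ : Measure Ω) [IsProbabilityMeasure μ]
    {d : ℕ} (v vtil : Ω → Fin d → ℝ)
    (hv : ∀ i, MemLp (fun ω => v ω i) 2 μ)
    (hvtil : ∀ i, MemLp (fun ω => vtil ω i) 2 μ)
    (hswap : ∀ S : Finset (Fin d),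
      (∀ i, ∫ ω, (if i ∈ S then vtil ω i else v ω i) ∂μ = ∫ ω, v ω i ∂μ) ∧
      (∀ i, ∫ ω, (if i ∈ S then v ω i else vtil ω i) ∂μ = ∫ ω, vtil ω i ∂μ) ∧
      covMatrix μ (fun ω i => if i ∈ S then vtil ω i else v ω i)
          (fun ω i => if i ∈ S then vtil ω i else v ω i) = covMatrix μ v v ∧
      covMatrix μ (fun ω i => if i ∈ S then vtil ω i else v ω i)
          (fun ω i => if i ∈ S then v ω i else vtil ω i) = covMatrix μ v vtil ∧
      covMatrix μ (fun ω i => if i ∈ S then v ω i else vtil ω i)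
          (fun ω i => if i ∈ S then vtil ω i else v ω i) = covMatrix μ vtil v ∧
      covMatrix μ (fun ω i => if i ∈ S then v ω i else vtil ω i)
          (fun ω i => if i ∈ S then v ω i else vtil ω i) = covMatrix μ vtil vtil) :
    (∀ i, ∫ ω, v ω i ∂μ = ∫ ω, vtil ω i ∂μ) ∧
    covMatrix μ v v = covMatrix μ vtil vtil ∧
    (∀ i j, i ≠ j → covMatrix μ v vtil i j = covMatrix μ v v i j) := by
  have hV : (fun ω i => if i ∈ (Finset.univ : Finset (Fin d)) then v ω i else vtil ω i) = v := by
    funext ω i; simp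
  have hVt : (fun ω i => if i ∈ (Finset.univ : Finset (Fin d)) then vtil ω i else v ω i) = vtil := by
    funext ω i; simp
  refine ⟨fun i => ?_, ?_, fun i j hij => ?_⟩
  · have h := (hswap Finset.univ).1 i
    simpa using h.symm
  · have h := (hswap Finset.univ).2.2.2.2.2
    rwa [hV] at h
  · have h := congrFun (congrFun (hswap {j}).2.2.2.1 i) j
    have hi : i ∉ ({j} : Finset (Fin d)) := by simpa using hij
    rw [← h]
    simp only [covMatrix, Finset.mem_singleton, if_pos rfl, if_neg (by simpa using hij), if_true]
end

section
/- The block matrix G = [[Σ, Σ − diag(s)], [Σ − diag(s), Σ]] is positive semidefinite if and only if s ≥ 0 componentwise and 2Σ − diag(s) is positive semidefinite (where Σ is a symmetric positive semidefinite d×d matrix). -/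
open Matrix

private lemma symm_dot {d : ℕ} {M : Matrix (Fin d) (Fin d) ℝ} (hM : M.IsSymm)
    (a b : Fin d → ℝ) : a ⬝ᵥ (M *ᵥ b) = b ⬝ᵥ (M *ᵥ a) := by
  rw [dotProduct_mulVec, ← mulVec_transpose, hM.eq, dotProduct_comm]

private lemma quad_id {d : ℕ} (Sig D : Matrix (Fin d) (Fin d) ℝ) (hS : Sig.IsSymm)
    (hD : D.IsSymm) (a b : Fin d → ℝ) :
    a ⬝ᵥ (Sig *ᵥ a) + a ⬝ᵥ ((Sig - D) *ᵥ b) + (b ⬝ᵥ ((Sig - D) *ᵥ a) + b ⬝ᵥ (Sig *ᵥ b))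
      = (1/2) * ((a + b) ⬝ᵥ (((2:ℝ) • Sig - D) *ᵥ (a + b)))
        + (1/2) * ((a - b) ⬝ᵥ (D *ᵥ (a - b))) := by
  simp only [sub_mulVec, mulVec_add, mulVec_sub, smul_mulVec, dotProduct_add,
    add_dotProduct, dotProduct_sub, sub_dotProduct, dotProduct_smul, smul_eq_mul]
  rw [symm_dot hS b a, symm_dot hD b a]
  ring

/-- The knockoff block matrix `G = [[Σ, Σ − diag s], [Σ − diag s, Σ]]` is positive semidefinite
iff `s ≥ 0` componentwise and `2Σ − diag s` is positive semidefinite. -/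
theorem knockoff_block_posSemidef_iff
    {d : ℕ} (Sig : Matrix (Fin d) (Fin d) ℝ) (hSym : Sig.IsSymm) (hPSD : Sig.PosSemidef)
    (s : Fin d → ℝ) :
    (Matrix.fromBlocks Sig (Sig - Matrix.diagonal s) (Sig - Matrix.diagonal s) Sig).PosSemidef
      ↔ (∀ j, 0 ≤ s j) ∧ ((2 : ℝ) • Sig - Matrix.diagonal s).PosSemidef := by
  have hDsym : (Matrix.diagonal s).IsSymm := isSymm_diagonal s
  rw [posSemidef_iff_dotProduct_mulVec, posSemidef_iff_dotProduct_mulVec]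
  constructor
  · rintro ⟨hH, hq⟩
    have key : ∀ a b : Fin d → ℝ,
        0 ≤ (1/2) * ((a + b) ⬝ᵥ (((2:ℝ) • Sig - Matrix.diagonal s) *ᵥ (a + b)))
          + (1/2) * ((a - b) ⬝ᵥ (Matrix.diagonal s *ᵥ (a - b))) := by
      intro a b
      have := hq (Sum.elim a b)
      rw [star_trivial, fromBlocks_mulVec] at this
      simp only [Sum.elim_comp_inl, Sum.elim_comp_inr, sumElim_dotProduct_sumElim,
        dotProduct_add] at this
      rwa [quad_id Sig (Matrix.diagonal s) hSym hDsym a b] at this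
    constructor
    · intro j
      have h := key (Pi.single j 1) (-(Pi.single j 1))
      have e1 : (Pi.single j 1 : Fin d → ℝ) + -(Pi.single j 1) = 0 := by simp
      have e2 : ((Pi.single j 1 : Fin d → ℝ) - -(Pi.single j 1)) ⬝ᵥ
          (Matrix.diagonal s *ᵥ ((Pi.single j 1 : Fin d → ℝ) - -(Pi.single j 1))) = 4 * s j := by
        simp only [sub_neg_eq_add, mulVec_diagonal, dotProduct, Pi.add_apply, Pi.single_apply]
        rw [Finset.sum_congr rfl (g := fun x => if x = j then 4 * s j else 0)
          (fun x _ => by by_cases hx : x = j <;> simp [hx] <;> ring)]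
        simp
      rw [e1, e2] at h
      simp only [mulVec_zero, dotProduct_zero, mul_zero, zero_add] at h
      linarith
    · refine ⟨?_, fun z => ?_⟩
      · show _ᴴ = _
        rw [conjTranspose_eq_transpose_of_trivial, transpose_sub, transpose_smul,
          hSym.eq, hDsym.eq]
      · have h := key z z
        rw [sub_self] at h
        simp only [mulVec_zero, dotProduct_zero, mul_zero, add_zero] at h
        have e1 : (z + z) ⬝ᵥ (((2:ℝ) • Sig - Matrix.diagonal s) *ᵥ (z + z))
            = 4 * (z ⬝ᵥ (((2:ℝ) • Sig - Matrix.diagonal s) *ᵥ z)) := by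
          simp only [mulVec_add, dotProduct_add, add_dotProduct]
          ring
        rw [e1] at h
        rw [star_trivial]
        linarith
  · rintro ⟨hs, h2⟩
    constructor
    · have hsub : (Sig - Matrix.diagonal s).IsSymm := hSym.sub hDsym
      show _ᴴ = _
      rw [conjTranspose_eq_transpose_of_trivial, fromBlocks_transpose, hSym.eq, hsub.eq]
    · intro x
      rw [star_trivial, ← Sum.elim_comp_inl_inr x, fromBlocks_mulVec]
      simp only [Sum.elim_comp_inl, Sum.elim_comp_inr, sumElim_dotProduct_sumElim,
        dotProduct_add]
      rw [quad_id Sig (Matrix.diagonal s) hSym hDsym]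
      have t1 := h2.2 ((x ∘ Sum.inl) + (x ∘ Sum.inr))
      have t2 := (posSemidef_iff_dotProduct_mulVec.mp
        (Matrix.PosSemidef.diagonal (by exact hs : (0:Fin d → ℝ) ≤ s))).2
        ((x ∘ Sum.inl) - (x ∘ Sum.inr))
      rw [star_trivial] at t1 t2
      nlinarith [t1, t2]
end

section
/- Let Σ be symmetric positive definite with smallest eigenvalue λ_min > 0. Then for any s ∈ ℝ^d with 0 ≤ s_j ≤ 2λ_min for all j, the block matrix [[Σ, Σ − diag(s)], [Σ − diag(s), Σ]] is positive semidefinite; hence a valid second-order knockoff covariance structure with parameter s exists. -/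
open Matrix

/-- If `Σ` is symmetric positive definite with smallest eigenvalue `λ_min`, then for any
`s` with `0 ≤ sⱼ ≤ 2 λ_min` for all `j`, the knockoff block matrix
`[[Σ, Σ − diag s], [Σ − diag s, Σ]]` is positive semidefinite. -/
theorem knockoff_block_posSemidef_of_small_s
    {d : ℕ} (Sig : Matrix (Fin d) (Fin d) ℝ) (hH : Sig.IsHermitian) (hPD : Sig.PosDef)
    (s : Fin d → ℝ) (hs0 : ∀ j, 0 ≤ s j)
    (hs2 : ∀ j i, s j ≤ 2 * hH.eigenvalues i) :
    (Matrix.fromBlocks Sig (Sig - Matrix.diagonal s)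
      (Sig - Matrix.diagonal s) Sig).PosSemidef := by
  set t : Fin d → ℝ := fun j => s j / 2 with ht
  set A : Matrix (Fin d) (Fin d) ℝ := Sig - Matrix.diagonal t with hAdef
  set D : Matrix (Fin d) (Fin d) ℝ := Matrix.diagonal t with hDdef
  have hD : D.PosSemidef := Matrix.posSemidef_diagonal_iff.mpr fun j => by
    have := hs0 j; simp only [ht]; linarith
  have hA : A.PosSemidef := by
    rcases Nat.eq_zero_or_pos d with hd | hd
    · subst hd
      refine ⟨by ext i j; exact i.elim0, fun x => ?_⟩
      simp [Finsupp.sum, Finset.eq_empty_of_isEmpty x.support]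
    · have hne : (Finset.univ : Finset (Fin d)).Nonempty :=
        ⟨⟨0, hd⟩, Finset.mem_univ _⟩
      set c : ℝ := Finset.univ.inf' hne hH.eigenvalues with hc
      have hcle : ∀ i, c ≤ hH.eigenvalues i := fun i =>
        Finset.inf'_le _ (Finset.mem_univ i)
      have h1 : (Sig - c • (1 : Matrix (Fin d) (Fin d) ℝ)).PosSemidef := by
        have hU : (hH.eigenvectorUnitary : Matrix (Fin d) (Fin d) ℝ) *
            star (hH.eigenvectorUnitary : Matrix (Fin d) (Fin d) ℝ) = 1 :=
          (Matrix.mem_unitaryGroup_iff).mp hH.eigenvectorUnitary.2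
        have hspec := hH.spectral_theorem
        have heq : Sig - c • (1 : Matrix (Fin d) (Fin d) ℝ) =
            (hH.eigenvectorUnitary : Matrix (Fin d) (Fin d) ℝ) *
              Matrix.diagonal (fun i => hH.eigenvalues i - c) *
              ((hH.eigenvectorUnitary : Matrix (Fin d) (Fin d) ℝ))ᴴ := by
          have hdiag : Matrix.diagonal (fun i => hH.eigenvalues i - c) =
              Matrix.diagonal (RCLike.ofReal ∘ hH.eigenvalues) -
                c • (1 : Matrix (Fin d) (Fin d) ℝ) := by
            ext i j
            by_cases h : i = j <;>
              simp [Matrix.diagonal_apply, Matrix.one_apply, h]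
          rw [hdiag, Matrix.mul_sub, Matrix.sub_mul, ← Matrix.star_eq_conjTranspose]
          rw [Unitary.conjStarAlgAut_apply] at hspec
          rw [← hspec]
          congr 1
          rw [Matrix.mul_smul, Matrix.smul_mul, Matrix.mul_one, hU]
        rw [heq]
        exact (Matrix.posSemidef_diagonal_iff.mpr fun i =>
          sub_nonneg.mpr (hcle i)).mul_mul_conjTranspose_same _
      have h2 : (Matrix.diagonal (fun j => c - t j)).PosSemidef :=
        Matrix.posSemidef_diagonal_iff.mpr fun j => by
          have hle : t j ≤ c := Finset.le_inf' hne _ fun i _ => by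
            have := hs2 j i; simp only [ht]; linarith
          linarith
      have hsplit : A = (Sig - c • (1 : Matrix (Fin d) (Fin d) ℝ)) +
          Matrix.diagonal (fun j => c - t j) := by
        ext i j
        by_cases h : i = j <;>
          simp [hAdef, hDdef, ht, Matrix.diagonal_apply, Matrix.one_apply, h] <;> ring
      rw [hsplit]
      exact h1.add h2
  -- two congruence pieces
  have P1 : (Matrix.fromBlocks A A A A).PosSemidef := by
    have := hA.mul_mul_conjTranspose_same
      (Matrix.fromRows (1 : Matrix (Fin d) (Fin d) ℝ) (1 : Matrix (Fin d) (Fin d) ℝ))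
    rwa [Matrix.conjTranspose_fromRows_eq_fromCols_conjTranspose,
      Matrix.conjTranspose_one, Matrix.fromRows_mul, Matrix.one_mul,
      Matrix.fromRows_mul_fromCols, Matrix.mul_one] at this
  have P2 : (Matrix.fromBlocks D (-D) (-D) D).PosSemidef := by
    have := hD.mul_mul_conjTranspose_same
      (Matrix.fromRows (1 : Matrix (Fin d) (Fin d) ℝ) (-1 : Matrix (Fin d) (Fin d) ℝ))
    rwa [Matrix.conjTranspose_fromRows_eq_fromCols_conjTranspose,
      Matrix.conjTranspose_neg, Matrix.conjTranspose_one, Matrix.fromRows_mul,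
      one_mul, neg_one_mul, Matrix.fromRows_mul_fromCols,
      Matrix.mul_one, Matrix.mul_one, mul_neg_one, mul_neg_one, neg_neg] at this
  have hADsum : A + D = Sig := by
    ext i j
    by_cases h : i = j <;> simp [hAdef, hDdef, ht, Matrix.diagonal_apply, h]
  have hADdiff : A + -D = Sig - Matrix.diagonal s := by
    ext i j
    by_cases h : i = j <;>
      simp [hAdef, hDdef, ht, Matrix.diagonal_apply, h] <;> ring
  have hfinal : Matrix.fromBlocks Sig (Sig - Matrix.diagonal s)
      (Sig - Matrix.diagonal s) Sig =
      Matrix.fromBlocks A A A A + Matrix.fromBlocks D (-D) (-D) D := by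
    rw [Matrix.fromBlocks_add, hADsum, hADdiff]
  rw [hfinal]
  exact P1.add P2
end

section
/- If Ã is a knockoff of A with respect to Y and Z is a random element independent of (A, Ã, Y), then for any measurable h, the pair (h(A, Z), h(Ã, Z)) satisfies the conditional independence property: h(Ã, Z) ⊥ Y | (A, Z). -/
open MeasureTheory ProbabilityTheory

lemma comap_comp_le' {Ω α β : Type*} [mα : MeasurableSpace α] [mβ : MeasurableSpace β]
    {X : Ω → α} {φ : α → β} (hφ : Measurable φ) :
    MeasurableSpace.comap (fun ω => φ (X ω)) mβ ≤ MeasurableSpace.comap X mα :=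
  @Measurable.comap_le Ω β (MeasurableSpace.comap X mα) mβ _
    (hφ.comp (Measurable.of_comap_le le_rfl))

lemma condexp_comap_prod_of_indep
    {Ω α β δ : Type*} [mΩ : MeasurableSpace Ω] (μ : Measure Ω) [IsProbabilityMeasure μ]
    [mα : MeasurableSpace α] [mβ : MeasurableSpace β] [mδ : MeasurableSpace δ]
    {X : Ω → α} {Z : Ω → β} {T : Ω → δ} (hX : Measurable X) (hZ : Measurable Z)
    (hT : Measurable T)
    (hXm : MeasurableSpace.comap X mα ≤ MeasurableSpace.comap T mδ)
    (hindep : IndepFun T Z μ)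
    {W : Ω → ℝ} (hW : StronglyMeasurable[MeasurableSpace.comap T mδ] W)
    (hWint : Integrable W μ) :
    μ[W | MeasurableSpace.comap (fun ω => (X ω, Z ω)) inferInstance]
      =ᵐ[μ] μ[W | MeasurableSpace.comap X mα] := by
  have hm : MeasurableSpace.comap (fun ω => (X ω, Z ω)) inferInstance ≤ mΩ :=
    (hX.prodMk hZ).comap_le
  have hXle : MeasurableSpace.comap X mα
      ≤ MeasurableSpace.comap (fun ω => (X ω, Z ω)) inferInstance :=
    @comap_comp_le' Ω (α × β) α _ _ (fun ω => (X ω, Z ω)) Prod.fst measurable_fst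
  -- the general product rule for set integrals
  have hprod : ∀ (F : Ω → ℝ), StronglyMeasurable[MeasurableSpace.comap T mδ] F → Integrable F μ →
      ∀ (s : Set α) (u : Set β), MeasurableSet s → MeasurableSet u →
      ∫ x in (X ⁻¹' s ∩ Z ⁻¹' u), F x ∂μ
        = (∫ x in X ⁻¹' s, F x ∂μ) * (μ (Z ⁻¹' u)).toReal := by
    intro F hF hFint s u hs hu
    have hsX : MeasurableSet[MeasurableSpace.comap X mα] (X ⁻¹' s) := ⟨s, hs, rfl⟩
    have hfm : StronglyMeasurable[MeasurableSpace.comap T mδ] ((X ⁻¹' s).indicator F) := hF.indicator (hXm _ hsX)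
    have hgm : StronglyMeasurable[MeasurableSpace.comap Z mβ]
        ((Z ⁻¹' u).indicator (fun _ => (1 : ℝ))) :=
      stronglyMeasurable_const.indicator ⟨u, hu, rfl⟩
    have hindep' : Indep (MeasurableSpace.comap T mδ) (MeasurableSpace.comap Z mβ) μ := hindep
    have hfg : IndepFun ((X ⁻¹' s).indicator F) ((Z ⁻¹' u).indicator (fun _ => (1 : ℝ))) μ :=
      Kernel.indep_of_indep_of_le_right
        (Kernel.indep_of_indep_of_le_left hindep'
          (@Measurable.comap_le Ω ℝ (MeasurableSpace.comap T mδ) _ _ hfm.measurable))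
        (@Measurable.comap_le Ω ℝ (MeasurableSpace.comap Z mβ) _ _ hgm.measurable)
    have hfint : Integrable ((X ⁻¹' s).indicator F) μ := hFint.indicator (hX hs)
    have hgint : Integrable ((Z ⁻¹' u).indicator (fun _ => (1 : ℝ))) μ :=
      (integrable_const (1 : ℝ)).indicator (hZ hu)
    have hmul := hfg.integral_mul_eq_mul_integral hfint.aestronglyMeasurable hgint.aestronglyMeasurable
    have heq : (X ⁻¹' s).indicator F * (Z ⁻¹' u).indicator (fun _ => (1 : ℝ))
        = (X ⁻¹' s ∩ Z ⁻¹' u).indicator F := by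
      funext x
      simp only [Pi.mul_apply, Set.indicator]
      by_cases h1 : x ∈ X ⁻¹' s <;> by_cases h2 : x ∈ Z ⁻¹' u <;>
        simp [h1, h2, Set.mem_inter_iff]
    rw [heq, integral_indicator ((hX hs).inter (hZ hu))] at hmul
    rw [hmul, integral_indicator (hX hs), integral_indicator (hZ hu)]
    rw [setIntegral_const, smul_eq_mul, mul_one]
    rfl
  -- set integral equality on all m-measurable sets
  have hsetint : ∀ t : Set Ω,
      MeasurableSet[MeasurableSpace.comap (fun ω => (X ω, Z ω)) inferInstance] t →
      ∫ x in t, (μ[W | MeasurableSpace.comap X mα]) x ∂μ = ∫ x in t, W x ∂μ := by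
    have heqgen : MeasurableSpace.comap (fun ω => (X ω, Z ω)) inferInstance
        = MeasurableSpace.generateFrom
        ((fun S => (fun ω => (X ω, Z ω)) ⁻¹' S) '' (Set.image2 (· ×ˢ ·)
          { s : Set α | MeasurableSet s } { t : Set β | MeasurableSet t })) := by
      conv_lhs => rw [show (inferInstance : MeasurableSpace (α × β)) =
        MeasurableSpace.generateFrom (Set.image2 (· ×ˢ ·)
          { s : Set α | MeasurableSet s } { t : Set β | MeasurableSet t }) from
          generateFrom_prod.symm]
      rw [MeasurableSpace.comap_generateFrom]
    have hpi : IsPiSystem ((fun S => (fun ω => (X ω, Z ω)) ⁻¹' S) '' (Set.image2 (· ×ˢ ·)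
        { s : Set α | MeasurableSet s } { t : Set β | MeasurableSet t })) :=
      isPiSystem_prod.comap _
    intro t ht
    refine @MeasurableSpace.induction_on_inter Ω
      (MeasurableSpace.comap (fun ω => (X ω, Z ω)) inferInstance)
      (fun t _ => ∫ x in t, (μ[W | MeasurableSpace.comap X mα]) x ∂μ = ∫ x in t, W x ∂μ)
      _ heqgen hpi ?_ ?_ ?_ ?_ t ht
    · simp
    · rintro _ ⟨_, ⟨s, hs, u, hu, rfl⟩, rfl⟩
      simp only [Set.mem_setOf_eq] at hs hu
      have hpre : (fun ω => (X ω, Z ω)) ⁻¹' (s ×ˢ u) = X ⁻¹' s ∩ Z ⁻¹' u :=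
        Set.mk_preimage_prod X Z
      show ∫ x in (fun ω => (X ω, Z ω)) ⁻¹' (s ×ˢ u), (μ[W | MeasurableSpace.comap X mα]) x ∂μ
        = ∫ x in (fun ω => (X ω, Z ω)) ⁻¹' (s ×ˢ u), W x ∂μ
      rw [hpre, hprod _ (stronglyMeasurable_condExp.mono hXm) integrable_condExp _ _ hs hu,
        hprod _ hW hWint _ _ hs hu,
        setIntegral_condExp hX.comap_le hWint ⟨s, hs, rfl⟩]
    · intro t htm hint
      have ht' : MeasurableSet t := hm _ htm
      have h1 := integral_add_compl ht' (integrable_condExp :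
        Integrable (μ[W | MeasurableSpace.comap X mα]) μ)
      have h2 := integral_add_compl ht' hWint
      have h3 : ∫ x, (μ[W | MeasurableSpace.comap X mα]) x ∂μ = ∫ x, W x ∂μ :=
        integral_condExp hX.comap_le
      linarith
    · intro f hdisj hfm hfC
      have hfm' : ∀ i, MeasurableSet (f i) := fun i => hm _ (hfm i)
      rw [integral_iUnion hfm' hdisj integrable_condExp.integrableOn,
        integral_iUnion hfm' hdisj hWint.integrableOn]
      exact tsum_congr hfC
  exact (ae_eq_condExp_of_forall_setIntegral_eq hm hWint
    (fun s _ _ => integrable_condExp.integrableOn)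
    (fun s hsm _ => hsetint s hsm)
    ((stronglyMeasurable_condExp.mono hXle).aestronglyMeasurable)).symm

/-- If `Atil ⊥ Y | A` and `Z` is independent of `(A, Atil, Y)`, then for any jointly measurable
`h`, `h(Atil, Z)` is conditionally independent of `Y` given `(A, Z)`. -/
theorem condIndep_with_independent_noise
    {Ω γ ζ ε : Type*} [MeasurableSpace Ω] [StandardBorelSpace Ω]
    [MeasurableSpace γ] [MeasurableSpace ζ] [MeasurableSpace ε]
    (μ : Measure Ω) [IsProbabilityMeasure μ]
    {d : ℕ} (A Atil : Ω → Fin d → ℝ) (Y : Ω → γ) (Z : Ω → ζ)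
    (hA : Measurable A) (hAtil : Measurable Atil) (hY : Measurable Y) (hZ : Measurable Z)
    (hCI : CondIndepFun (MeasurableSpace.comap A inferInstance) hA.comap_le Atil Y μ)
    (hZindep : IndepFun Z (fun ω => (A ω, Atil ω, Y ω)) μ)
    (h : (Fin d → ℝ) × ζ → ε) (hh : Measurable h) :
    CondIndepFun (MeasurableSpace.comap (fun ω => (A ω, Z ω)) inferInstance)
      ((hA.prodMk hZ).comap_le) (fun ω => h (Atil ω, Z ω)) Y μ := by
  have hT : Measurable (fun ω => (A ω, Atil ω, Y ω)) := hA.prodMk (hAtil.prodMk hY)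
  have hindepTZ : IndepFun (fun ω => (A ω, Atil ω, Y ω)) Z μ := hZindep.symm
  have hA_le : MeasurableSpace.comap A inferInstance
      ≤ MeasurableSpace.comap (fun ω => (A ω, Atil ω, Y ω)) inferInstance :=
    @comap_comp_le' Ω ((Fin d → ℝ) × (Fin d → ℝ) × γ) (Fin d → ℝ) _ _
      (fun ω => (A ω, Atil ω, Y ω)) Prod.fst measurable_fst
  -- key conditional expectation identity, specialized
  have hkey : ∀ (S : Set Ω), MeasurableSet S →
      MeasurableSet[MeasurableSpace.comap (fun ω => (A ω, Atil ω, Y ω)) inferInstance] S →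
      μ[(S.indicator fun _ => (1:ℝ)) | MeasurableSpace.comap (fun ω => (A ω, Z ω)) inferInstance]
        =ᵐ[μ] μ[(S.indicator fun _ => (1:ℝ)) | MeasurableSpace.comap A inferInstance] := by
    intro S hSamb hST
    exact condexp_comap_prod_of_indep μ hA hZ hT hA_le hindepTZ
      (stronglyMeasurable_const.indicator hST)
      ((integrable_const (1:ℝ)).indicator hSamb)
  have hpair : CondIndepFun (MeasurableSpace.comap (fun ω => (A ω, Z ω)) inferInstance)
      ((hA.prodMk hZ).comap_le) (fun ω => (Atil ω, Z ω)) Y μ := by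
    rw [condIndepFun_iff_condIndep]
    refine CondIndepSets.condIndep
      (p1 := (fun S => (fun ω => (Atil ω, Z ω)) ⁻¹' S) '' (Set.image2 (· ×ˢ ·)
        { s : Set (Fin d → ℝ) | MeasurableSet s } { t : Set ζ | MeasurableSet t }))
      (p2 := (fun S => Y ⁻¹' S) '' { t : Set γ | MeasurableSet t })
      (hAtil.prodMk hZ).comap_le hY.comap_le
      (isPiSystem_prod.comap _) (MeasurableSpace.isPiSystem_measurableSet.comap _) ?_ ?_ ?_
    · conv_lhs => rw [← generateFrom_prod]
      rw [MeasurableSpace.comap_generateFrom]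
    · conv_lhs => rw [← MeasurableSpace.generateFrom_measurableSet (α := γ)]
      rw [MeasurableSpace.comap_generateFrom]
    · rw [condIndepSets_iff]
      rotate_left
      · rintro _ ⟨_, ⟨s, hs, u, hu, rfl⟩, rfl⟩
        simp only [Set.mem_setOf_eq] at hs hu
        exact (hAtil.prodMk hZ) (hs.prod hu)
      · rintro _ ⟨t, ht, rfl⟩
        exact hY ht
      rintro _ _ ⟨_, ⟨s, hs, u, hu, rfl⟩, rfl⟩ ⟨t, ht, rfl⟩
      simp only [Set.mem_setOf_eq] at hs hu ht
      have hpre : (fun ω => (Atil ω, Z ω)) ⁻¹' (s ×ˢ u) = Atil ⁻¹' s ∩ Z ⁻¹' u :=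
        Set.mk_preimage_prod Atil Z
      beta_reduce
      rw [hpre]
      -- measurability facts
      have hQm : MeasurableSet[MeasurableSpace.comap (fun ω => (A ω, Z ω)) inferInstance]
          (Z ⁻¹' u) := ⟨Set.univ ×ˢ u, MeasurableSet.univ.prod hu, by ext ω; simp⟩
      have hQsm : StronglyMeasurable[MeasurableSpace.comap (fun ω => (A ω, Z ω)) inferInstance]
          ((Z ⁻¹' u).indicator fun _ => (1:ℝ)) := stronglyMeasurable_const.indicator hQm
      have hPTm : MeasurableSet[MeasurableSpace.comap
          (fun ω => (A ω, Atil ω, Y ω)) inferInstance] (Atil ⁻¹' s ∩ Y ⁻¹' t) :=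
        ⟨Set.univ ×ˢ s ×ˢ t, MeasurableSet.univ.prod (hs.prod ht), by ext ω; simp⟩
      have hPm : MeasurableSet[MeasurableSpace.comap
          (fun ω => (A ω, Atil ω, Y ω)) inferInstance] (Atil ⁻¹' s) :=
        ⟨Set.univ ×ˢ s ×ˢ Set.univ, MeasurableSet.univ.prod (hs.prod .univ), by ext ω; simp⟩
      have hTm : MeasurableSet[MeasurableSpace.comap
          (fun ω => (A ω, Atil ω, Y ω)) inferInstance] (Y ⁻¹' t) :=
        ⟨Set.univ ×ˢ Set.univ ×ˢ t, MeasurableSet.univ.prod (MeasurableSet.univ.prod ht),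
          by ext ω; simp⟩
      -- indicator algebra
      have e1 : ((Atil ⁻¹' s ∩ Z ⁻¹' u) ∩ Y ⁻¹' t).indicator (fun _ => (1:ℝ))
          = (Z ⁻¹' u).indicator (fun _ => (1:ℝ))
            * (Atil ⁻¹' s ∩ Y ⁻¹' t).indicator (fun _ => (1:ℝ)) := by
        funext x
        simp only [Pi.mul_apply, Set.indicator]
        by_cases h1 : x ∈ Atil ⁻¹' s <;> by_cases h2 : x ∈ Z ⁻¹' u <;>
          by_cases h3 : x ∈ Y ⁻¹' t <;> simp [h1, h2, h3, Set.mem_inter_iff]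
      have e2 : (Atil ⁻¹' s ∩ Z ⁻¹' u).indicator (fun _ => (1:ℝ))
          = (Z ⁻¹' u).indicator (fun _ => (1:ℝ)) * (Atil ⁻¹' s).indicator (fun _ => (1:ℝ)) := by
        funext x
        simp only [Pi.mul_apply, Set.indicator]
        by_cases h1 : x ∈ Atil ⁻¹' s <;> by_cases h2 : x ∈ Z ⁻¹' u <;>
          simp [h1, h2, Set.mem_inter_iff]
      -- pull-out lemmas
      have l1 := condExp_mul_of_stronglyMeasurable_left (μ := μ)
        (m := MeasurableSpace.comap (fun ω => (A ω, Z ω)) inferInstance) hQsm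
        (by rw [← e1]
            exact (integrable_const (1:ℝ)).indicator
              (((hAtil hs).inter (hZ hu)).inter (hY ht)))
        ((integrable_const (1:ℝ)).indicator ((hAtil hs).inter (hY ht)))
      have r1 := condExp_mul_of_stronglyMeasurable_left (μ := μ)
        (m := MeasurableSpace.comap (fun ω => (A ω, Z ω)) inferInstance) hQsm
        (by rw [← e2]
            exact (integrable_const (1:ℝ)).indicator ((hAtil hs).inter (hZ hu)))
        ((integrable_const (1:ℝ)).indicator (hAtil hs))
      -- key identities
      have l2 := hkey _ ((hAtil hs).inter (hY ht)) hPTm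
      have r2 := hkey _ (hAtil hs) hPm
      have r3 := hkey _ (hY ht) hTm
      -- conditional independence hypothesis
      rw [condIndepFun_iff _ _ Atil Y hAtil hY μ] at hCI
      have l3 := hCI (Atil ⁻¹' s) (Y ⁻¹' t) ⟨s, hs, rfl⟩ ⟨t, ht, rfl⟩
      have e3 : (Atil ⁻¹' s ∩ Y ⁻¹' t).indicator (fun _ => (1:ℝ))
          = Set.indicator (Atil ⁻¹' s ∩ Y ⁻¹' t) fun _ => (1:ℝ) := rfl
      rw [e1, e2]
      filter_upwards [l1, l2, l3, r1, r2, r3] with ω h1 h2 h3 h4 h5 h6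
      simp only [Pi.mul_apply] at h1 h3 h4 ⊢
      rw [h1, h2, h3, h4, h5]
      have h6' := h6
      rw [h6']
      ring
  have := hpair.comp hh measurable_id
  exact this
end

section
/- Variance of the swapped vector: if (v, ṽ) has covariance structure Cov(v)=Cov(ṽ)=Σ, Cov(v,ṽ)=Σ−diag(s), then for any S ⊆ {1,…,d} the vector w defined by w_j = ṽ_j for j ∈ S and w_j = v_j otherwise satisfies Cov(w) = Σ; i.e., each partially swapped vector has exactly the same covariance matrix Σ. -/
open MeasureTheory Matrix

/-- If zero-mean `(v, vtil)` have `Cov v = Cov vtil = Σ` (symmetric) and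
`Cov(v, vtil) = Σ − diag s`, then for any subset `S` the partially swapped vector,
taking coordinates from `vtil` on `S` and from `v` off `S`, has covariance exactly `Σ`. -/
theorem swapped_vector_covariance
    {Ω : Type*} [MeasurableSpace Ω] (μ : Measure Ω) [IsProbabilityMeasure μ]
    {d : ℕ} (v vtil : Ω → Fin d → ℝ)
    (hv : ∀ i, MemLp (fun ω => v ω i) 2 μ)
    (hvtil : ∀ i, MemLp (fun ω => vtil ω i) 2 μ)
    (hvmean : ∀ i, ∫ ω, v ω i ∂μ = 0) (hvtilmean : ∀ i, ∫ ω, vtil ω i ∂μ = 0)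
    (Sig : Matrix (Fin d) (Fin d) ℝ) (hSym : Sig.IsSymm) (s : Fin d → ℝ)
    (hcov : covMatrix μ v v = Sig) (hcovtil : covMatrix μ vtil vtil = Sig)
    (hcross : covMatrix μ v vtil = Sig - Matrix.diagonal s) :
    ∀ S : Finset (Fin d),
      covMatrix μ (fun ω i => if i ∈ S then vtil ω i else v ω i)
        (fun ω i => if i ∈ S then vtil ω i else v ω i) = Sig := by
  intro S
  have hmean : ∀ i, ∫ ω, (if i ∈ S then vtil ω i else v ω i) ∂μ = 0 := by
    intro i; split <;> simp [hvmean, hvtilmean]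
  have hvv : ∀ i j, ∫ ω, v ω i * v ω j ∂μ = Sig i j := by
    intro i j
    have := congrFun (congrFun hcov i) j
    simpa [covMatrix, hvmean] using this
  have htt : ∀ i j, ∫ ω, vtil ω i * vtil ω j ∂μ = Sig i j := by
    intro i j
    have := congrFun (congrFun hcovtil i) j
    simpa [covMatrix, hvtilmean] using this
  have hvt : ∀ i j, ∫ ω, v ω i * vtil ω j ∂μ = Sig i j - Matrix.diagonal s i j := by
    intro i j
    have := congrFun (congrFun hcross i) j
    simpa [covMatrix, hvmean, hvtilmean] using this
  have htv : ∀ i j, ∫ ω, vtil ω i * v ω j ∂μ = Sig j i - Matrix.diagonal s j i := by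
    intro i j
    rw [← hvt j i]
    exact integral_congr_ae (Filter.Eventually.of_forall fun ω => mul_comm _ _)
  funext i j
  simp only [covMatrix, hmean, sub_zero]
  by_cases hi : i ∈ S <;> by_cases hj : j ∈ S <;> simp only [hi, hj, if_true, if_false]
  · exact htt i j
  · have hij : i ≠ j := fun h => hj (h ▸ hi)
    rw [htv i j, Matrix.diagonal_apply_ne s (Ne.symm hij), sub_zero]
    exact congrFun (congrFun hSym i) j
  · have hij : i ≠ j := fun h => hi (h ▸ hj)
    rw [hvt i j, Matrix.diagonal_apply_ne s hij, sub_zero]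
  · exact hvv i j
end
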